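/- arXiv:2412.14441 — 2 statements merged into one kernel-verified Lean document; each statement's English description precedes it below -/
import Mathlib

section
/- If matrix multiplication of m×m matrices over a ring can be done with fewer than m^α scalar multiplications (a < m^α where a is the number of multiplications, b = m), then the recursive algorithm multiplies n×n matrices in O(n^α) ring operations for all n that are powers of m. -/
/-- Strassen-style recursion: if `m × m` matrix multiplication over a ring uses
`a < m^α` scalar multiplications (and `O(n²)` additions per level, `2 < α`), then
the recursive algorithm's operation count on `n = m^k` is `O(n^α)`. -/
theorem stmt6 (m a : ℕ) (hm : 2 ≤ m) (α : ℝ) (hα : 2 < α) (ha : (a : ℝ) < (m : ℝ) ^ α)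
    (C c₀ : ℝ) (hC : 0 ≤ C) (hc₀ : 0 ≤ c₀)
    (T : ℕ → ℝ) (hT0 : T 0 ≤ c₀) (hTnn : ∀ k, 0 ≤ T k)
    (hrec : ∀ k, T (k+1) ≤ (a : ℝ) * T k + C * ((m : ℝ) ^ (k+1)) ^ 2) :
    ∃ K : ℝ, 0 < K ∧ ∀ k, T k ≤ K * ((m : ℝ) ^ k) ^ α := by
  have hm0 : (0:ℝ) < (m:ℝ) := by positivity
  have hm1 : (1:ℝ) ≤ (m:ℝ) := by exact_mod_cast le_trans one_le_two hm
  set M := (m:ℝ) ^ α with hM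
  have hMpos : 0 < M := Real.rpow_pos_of_pos hm0 α
  have hD : 0 < M - a := by linarith
  obtain ⟨K, hK⟩ : ∃ K : ℝ, K = c₀ + C * (m:ℝ)^2 / (M - (a:ℝ)) + 1 := ⟨_, rfl⟩
  have hfrac : 0 ≤ C * (m:ℝ)^2 / (M - (a:ℝ)) := by positivity
  have hKpos : 0 < K := by rw [hK]; linarith
  have hpow : ∀ k : ℕ, ((m:ℝ)^k)^α = M^k := by
    intro k
    rw [← Real.rpow_natCast (m:ℝ) k, ← Real.rpow_natCast M k, hM,
        ← Real.rpow_mul hm0.le, ← Real.rpow_mul hm0.le, mul_comm]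
  refine ⟨K, hKpos, ?_⟩
  intro k
  rw [hpow]
  induction k with
  | zero => simpa using le_trans hT0 (by linarith)
  | succ k ih =>
    have hm2M : (m:ℝ)^2 ≤ M := by
      calc (m:ℝ)^2 = (m:ℝ) ^ ((2:ℕ):ℝ) := by rw [Real.rpow_natCast]
        _ ≤ (m:ℝ) ^ α := Real.rpow_le_rpow_of_exponent_le hm1 (by push_cast; linarith)
    have hsq : ((m:ℝ)^(k+1))^2 ≤ (m:ℝ)^2 * M^k := by
      have h1 : ((m:ℝ)^(k+1))^2 = (m:ℝ)^2 * ((m:ℝ)^2)^k := by ring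
      rw [h1]
      have h2 : ((m:ℝ)^2)^k ≤ M^k := pow_le_pow_left₀ (by positivity) hm2M k
      nlinarith [pow_nonneg (sq_nonneg (m:ℝ)) k, sq_nonneg (m:ℝ)]
    have hCm : C * (m:ℝ)^2 ≤ K * (M - a) := by
      have hcancel : C * (m:ℝ)^2 / (M - (a:ℝ)) * (M - (a:ℝ)) = C * (m:ℝ)^2 :=
        div_mul_cancel₀ _ (ne_of_gt hD)
      nlinarith
    have hMk : (0:ℝ) ≤ M^k := by positivity
    calc T (k+1) ≤ (a:ℝ) * T k + C * ((m:ℝ)^(k+1))^2 := hrec k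
      _ ≤ (a:ℝ) * (K * M^k) + C * ((m:ℝ)^2 * M^k) := by
          have hanneg : (0:ℝ) ≤ (a:ℝ) := by positivity
          nlinarith [hTnn k]
      _ = ((a:ℝ) * K + C * (m:ℝ)^2) * M^k := by ring
      _ ≤ (K * M) * M^k := by nlinarith
      _ = K * M^(k+1) := by ring
end

section
/- A binary hypercube on n vertices laid out in the plane with unit-area vertices and unit-width wires requires area Ω(n²): specifically, the bisection width of the n-vertex hypercube is n/2, and any planar layout of a graph with bisection width w requires area at least w²/ (a constant). -/
/-- The hypercube graph `Q_d` on vertex set `Fin d → Bool`: two vertices are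
adjacent iff they differ in exactly one coordinate. -/
def hypercube (d : ℕ) : SimpleGraph (Fin d → Bool) :=
  SimpleGraph.fromRel (fun x y => (Finset.univ.filter (fun i => x i ≠ y i)).card = 1)

/-- The number of edges of `G` crossing the cut `(S, Sᶜ)`. -/
noncomputable def crossCount {V : Type*} (G : SimpleGraph V) (S : Set V) : ℕ :=
  {p : V × V | p.1 ∈ S ∧ p.2 ∉ S ∧ G.Adj p.1 p.2}.ncard

/-- A Thompson-style planar grid layout of a graph `G`: vertices occupy distinct
unit-area grid points of a `Wd × Ht` box, each edge is routed as a unit-width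
grid path inside the box, and routes of distinct edges use disjoint unit grid
segments (crossings at points are allowed). -/
structure GridLayout {V : Type*} (G : SimpleGraph V) where
  Wd : ℕ
  Ht : ℕ
  pos : V → ℤ × ℤ
  pos_inj : Function.Injective pos
  pos_mem : ∀ v, 0 ≤ (pos v).1 ∧ (pos v).1 < Wd ∧ 0 ≤ (pos v).2 ∧ (pos v).2 < Ht
  route : V → V → List (ℤ × ℤ)
  route_head : ∀ u v, G.Adj u v → (route u v).head? = some (pos u)
  route_last : ∀ u v, G.Adj u v → (route u v).getLast? = some (pos v)
  route_chain : ∀ u v, G.Adj u v →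
    (route u v).Chain' (fun p q => |p.1 - q.1| + |p.2 - q.2| = 1)
  route_mem : ∀ u v, G.Adj u v → ∀ p ∈ route u v,
    0 ≤ p.1 ∧ p.1 < Wd ∧ 0 ≤ p.2 ∧ p.2 < Ht
  seg_disjoint : ∀ u v u' v', G.Adj u v → G.Adj u' v' → s(u, v) ≠ s(u', v') →
    ∀ sg ∈ (route u v).zip (route u v).tail,
      sg ∉ (route u' v').zip (route u' v').tail ∧
      (sg.2, sg.1) ∉ (route u' v').zip (route u' v').tail

open Finset

/-- cut pairs finset -/
noncomputable def cutF {V : Type*} [Fintype V] (N : V → V → Prop) (A : Finset V) :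
    Finset (V × V) :=
  @Finset.filter _ (fun p => p.1 ∈ A ∧ p.2 ∉ A ∧ N p.1 p.2) (Classical.decPred _) Finset.univ

lemma mem_cutF {V : Type*} [Fintype V] {N : V → V → Prop} {A : Finset V} {p : V × V} :
    p ∈ cutF N A ↔ p.1 ∈ A ∧ p.2 ∉ A ∧ N p.1 p.2 := by
  classical
  simp [cutF]

def IsoBnd (V : Type*) [Fintype V] (N : V → V → Prop) : Prop :=
  ∀ A : Finset V, min A.card (Fintype.card V - A.card) ≤ (cutF N A).card

/-- step relation on V × Bool -/
def stepRel {V : Type*} (N : V → V → Prop) (a b : V × Bool) : Prop :=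
  (a.2 = b.2 ∧ N a.1 b.1) ∨ (a.1 = b.1 ∧ a.2 ≠ b.2)

lemma isoBnd_step {V : Type*} [Fintype V] [DecidableEq V] {N : V → V → Prop}
    (h : IsoBnd V N) : IsoBnd (V × Bool) (stepRel N) := by
  classical
  intro A
  set A0 : Finset V := univ.filter (fun v => (v, false) ∈ A) with hA0
  set A1 : Finset V := univ.filter (fun v => (v, true) ∈ A) with hA1
  have hmem0 : ∀ v, v ∈ A0 ↔ (v, false) ∈ A := by intro v; simp [hA0]
  have hmem1 : ∀ v, v ∈ A1 ↔ (v, true) ∈ A := by intro v; simp [hA1]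
  -- card of A
  have hcardA : A.card = A0.card + A1.card := by
    have : A = A0.image (fun v => (v, false)) ∪ A1.image (fun v => (v, true)) := by
      ext ⟨v, b⟩
      cases b <;> simp [hmem0, hmem1]
    rw [this, card_union_of_disjoint, card_image_of_injective, card_image_of_injective]
    · intro a b hab; exact (Prod.mk.injEq _ _ _ _ ▸ hab).1
    · intro a b hab; exact (Prod.mk.injEq _ _ _ _ ▸ hab).1
    · rw [Finset.disjoint_left]; rintro ⟨v, b⟩ hv hw
      simp only [mem_image] at hv hw
      obtain ⟨_, _, h1⟩ := hv; obtain ⟨_, _, h2⟩ := hw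
      rw [← h2] at h1; simp at h1
  -- the four pieces
  set f00 : V × V → (V × Bool) × (V × Bool) := fun p => ((p.1, false), (p.2, false)) with hf00
  set f11 : V × V → (V × Bool) × (V × Bool) := fun p => ((p.1, true), (p.2, true)) with hf11
  set g0 : V → (V × Bool) × (V × Bool) := fun v => ((v, false), (v, true)) with hg0
  set g1 : V → (V × Bool) × (V × Bool) := fun v => ((v, true), (v, false)) with hg1
  set U : Finset ((V × Bool) × (V × Bool)) :=
    (cutF N A0).image f00 ∪ (cutF N A1).image f11 ∪ (A0 \ A1).image g0 ∪ (A1 \ A0).image g1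
    with hU
  have hUsub : U ⊆ cutF (stepRel N) A := by
    intro x hx
    simp only [hU, mem_union, mem_image] at hx
    rcases hx with ((⟨p, hp, rfl⟩ | ⟨p, hp, rfl⟩) | ⟨v, hv, rfl⟩) | ⟨v, hv, rfl⟩
    · rw [mem_cutF] at hp ⊢
      exact ⟨(hmem0 _).1 hp.1, fun hc => hp.2.1 ((hmem0 _).2 hc), Or.inl ⟨rfl, hp.2.2⟩⟩
    · rw [mem_cutF] at hp ⊢
      exact ⟨(hmem1 _).1 hp.1, fun hc => hp.2.1 ((hmem1 _).2 hc), Or.inl ⟨rfl, hp.2.2⟩⟩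
    · rw [mem_sdiff] at hv; rw [mem_cutF]
      exact ⟨(hmem0 _).1 hv.1, fun hc => hv.2 ((hmem1 _).2 hc), Or.inr ⟨rfl, by simp⟩⟩
    · rw [mem_sdiff] at hv; rw [mem_cutF]
      exact ⟨(hmem1 _).1 hv.1, fun hc => hv.2 ((hmem0 _).2 hc), Or.inr ⟨rfl, by simp⟩⟩
  have hUcard : (cutF N A0).card + (cutF N A1).card + (A0 \ A1).card + (A1 \ A0).card ≤ U.card := by
    rw [hU]
    rw [card_union_of_disjoint, card_union_of_disjoint, card_union_of_disjoint]
    · rw [card_image_of_injective, card_image_of_injective, card_image_of_injective,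
        card_image_of_injective]
      · intro a b hab; simpa [hg1, Prod.ext_iff] using hab
      · intro a b hab; simpa [hg0, Prod.ext_iff] using hab
      · intro a b hab; simpa [hf11, Prod.ext_iff] using hab
      · intro a b hab; simpa [hf00, Prod.ext_iff] using hab
    · rw [Finset.disjoint_left]; rintro x hx hy
      simp only [mem_image] at hx hy
      obtain ⟨p, _, rfl⟩ := hx; obtain ⟨q, _, h⟩ := hy
      simp [hf00, hf11, Prod.ext_iff] at h
    · rw [Finset.disjoint_left]; rintro x hx hy
      simp only [mem_union, mem_image] at hx hy
      obtain ⟨v, _, h⟩ := hy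
      rcases hx with ⟨p, _, rfl⟩ | ⟨p, _, rfl⟩ <;>
        simp [hf00, hf11, hg0, Prod.ext_iff] at h
    · rw [Finset.disjoint_left]; rintro x hx hy
      simp only [mem_union, mem_image] at hx hy
      obtain ⟨v, _, h⟩ := hy
      rcases hx with (⟨p, _, rfl⟩ | ⟨p, _, rfl⟩) | ⟨w, _, rfl⟩ <;>
        simp [hf00, hf11, hg0, hg1, Prod.ext_iff] at h
  have hle : (cutF N A0).card + (cutF N A1).card + (A0 \ A1).card + (A1 \ A0).card
      ≤ (cutF (stepRel N) A).card :=
    le_trans hUcard (card_le_card hUsub)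
  have h0 := h A0
  have h1 := h A1
  have hs0 : A0.card - A1.card ≤ (A0 \ A1).card := le_card_sdiff _ _
  have hs1 : A1.card - A0.card ≤ (A1 \ A0).card := le_card_sdiff _ _
  have hb0 : A0.card ≤ Fintype.card V := card_le_card (subset_univ _) |>.trans (by rw [card_univ])
  have hb1 : A1.card ≤ Fintype.card V := card_le_card (subset_univ _) |>.trans (by rw [card_univ])
  have hcardVB : Fintype.card (V × Bool) = 2 * Fintype.card V := by
    simp [Fintype.card_prod, mul_comm]
  rw [hcardVB, hcardA]
  omega

lemma isoBnd_congr {V W : Type*} [Fintype V] [Fintype W] [DecidableEq W] (e : V ≃ W)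
    {N : V → V → Prop} {N' : W → W → Prop} (h : ∀ a b, N a b ↔ N' (e a) (e b))
    (hW : IsoBnd W N') : IsoBnd V N := by
  classical
  intro A
  have hcard : Fintype.card V = Fintype.card W := Fintype.card_congr e
  have hinj2 : Function.Injective (Prod.map (⇑e) (⇑e)) := by
    intro p q hpq
    simp only [Prod.map, Prod.ext_iff] at hpq ⊢
    exact ⟨e.injective hpq.1, e.injective hpq.2⟩
  have himage : cutF N' (A.image e) = (cutF N A).image (Prod.map e e) := by
    ext ⟨w1, w2⟩
    constructor
    · intro hw
      rw [mem_cutF] at hw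
      obtain ⟨h1, h2, h3⟩ := hw
      rw [mem_image] at h1
      obtain ⟨v1, hv1, rfl⟩ := h1
      rw [mem_image]
      refine ⟨(v1, e.symm w2), ?_, by simp [Prod.map]⟩
      rw [mem_cutF]
      refine ⟨hv1, fun hc => h2 ?_, ?_⟩
      · rw [mem_image]; exact ⟨_, hc, by simp⟩
      · rw [h]; simpa using h3
    · intro hw
      rw [mem_image] at hw
      obtain ⟨⟨v1, v2⟩, hv, heq⟩ := hw
      rw [mem_cutF] at hv
      obtain ⟨h1, h2, h3⟩ := hv
      obtain ⟨rfl, rfl⟩ : e v1 = w1 ∧ e v2 = w2 := by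
        simpa [Prod.map, Prod.ext_iff] using heq
      rw [mem_cutF]
      refine ⟨mem_image_of_mem _ h1, ?_, (h _ _).1 h3⟩
      rw [mem_image]
      rintro ⟨v2', hv2', hv2eq⟩
      exact h2 (by rwa [e.injective hv2eq] at hv2')
  have := hW (A.image e)
  rw [himage, card_image_of_injective _ (e.injective),
    card_image_of_injective _ hinj2, ← hcard] at this
  exact this

/-- the hamming relation -/
def hamRel (d : ℕ) (x y : Fin d → Bool) : Prop :=
  (Finset.univ.filter (fun i => x i ≠ y i)).card = 1

lemma hamRel_succ (d : ℕ) (x y : Fin (d + 1) → Bool) :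
    hamRel (d + 1) x y ↔
      stepRel (hamRel d) (Fin.init x, x (Fin.last d)) (Fin.init y, y (Fin.last d)) := by
  classical
  have hsplit : (univ.filter fun i : Fin (d+1) => x i ≠ y i).card =
      (univ.filter fun i : Fin d => Fin.init x i ≠ Fin.init y i).card +
        (if x (Fin.last d) ≠ y (Fin.last d) then 1 else 0) := by
    rw [card_filter, card_filter, Fin.sum_univ_castSucc]
    rfl
  have hzero : (univ.filter fun i : Fin d => Fin.init x i ≠ Fin.init y i).card = 0 ↔
      Fin.init x = Fin.init y := by
    rw [card_eq_zero, filter_eq_empty_iff]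
    simp [funext_iff]
  by_cases hl : x (Fin.last d) = y (Fin.last d)
  · rw [hamRel, hsplit, if_neg (by simp [hl]), add_zero]
    simp [stepRel, hamRel, hl]
  · rw [hamRel, hsplit, if_pos (by simp [hl])]
    constructor
    · intro hx
      exact Or.inr ⟨hzero.1 (by omega), hl⟩
    · rintro (⟨h1, _⟩ | ⟨h1, _⟩)
      · exact absurd h1 hl
      · have : (univ.filter fun i : Fin d => Fin.init x i ≠ Fin.init y i).card = 0 :=
          hzero.2 h1
        omega

lemma isoBnd_ham (d : ℕ) : IsoBnd (Fin d → Bool) (hamRel d) := by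
  induction d with
  | zero =>
    intro A
    have h1 : Fintype.card (Fin 0 → Bool) = 1 := by simp
    have h2 : A.card ≤ 1 := h1 ▸ (card_le_card (subset_univ _)).trans (by rw [card_univ])
    omega
  | succ d ih =>
    have step := isoBnd_step ih
    refine isoBnd_congr (Equiv.mk (fun x => (Fin.init x, x (Fin.last d)))
      (fun p => Fin.snoc p.1 p.2) ?_ ?_) (fun a b => hamRel_succ d a b) step
    · intro x; simp [Fin.snoc_init_self]
    · rintro ⟨f, b⟩; simp

lemma hamRel_symm {d : ℕ} {x y : Fin d → Bool} (h : hamRel d x y) : hamRel d y x := by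
  rw [hamRel] at h ⊢
  convert h using 2
  ext i
  simp [ne_comm]

lemma hyp_adj {d : ℕ} {x y : Fin d → Bool} :
    (hypercube d).Adj x y ↔ hamRel d x y := by
  rw [hypercube, SimpleGraph.fromRel_adj]
  constructor
  · rintro ⟨hne, h | h⟩
    · exact h
    · exact hamRel_symm h
  · intro h
    refine ⟨?_, Or.inl h⟩
    rintro rfl
    rw [hamRel] at h
    simp at h

lemma crossCount_coe {V : Type*} [Fintype V] (G : SimpleGraph V) (S : Finset V) :
    crossCount G ↑S = (cutF G.Adj S).card := by
  rw [crossCount, show {p : V × V | p.1 ∈ (↑S : Set V) ∧ p.2 ∉ (↑S : Set V) ∧ G.Adj p.1 p.2}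
    = ↑(cutF G.Adj S) from ?_, Set.ncard_coe_finset]
  ext p
  simp [mem_cutF]

/-- lower bound half -/
lemma crossCount_lower {d : ℕ} (hd : 1 ≤ d) (S : Set (Fin d → Bool))
    (hS : 2 * S.ncard = Fintype.card (Fin d → Bool)) :
    2 ^ (d - 1) ≤ crossCount (hypercube d) S := by
  classical
  have hcardV : Fintype.card (Fin d → Bool) = 2 ^ d := by simp
  set F := S.toFinset with hF
  have hcoe : (↑F : Set (Fin d → Bool)) = S := Set.coe_toFinset S
  have hncard : S.ncard = F.card := by rw [← hcoe, Set.ncard_coe_finset]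
  have h2 : 2 * F.card = 2 ^ d := by rw [← hncard, hS, hcardV]
  have hFcard : F.card = 2 ^ (d - 1) := by
    have : 2 ^ d = 2 * 2 ^ (d - 1) := by
      rw [← pow_succ']
      congr 1
      omega
    omega
  have := isoBnd_ham d F
  rw [hcardV, hFcard] at this
  have hmin : min (2 ^ (d-1)) (2 ^ d - 2 ^ (d-1)) = 2 ^ (d-1) := by
    have : 2 ^ d = 2 * 2 ^ (d - 1) := by
      rw [← pow_succ']; congr 1; omega
    omega
  rw [hmin] at this
  rw [← hcoe, crossCount_coe]
  refine this.trans (card_le_card ?_)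
  intro p hp
  rw [mem_cutF] at hp ⊢
  exact ⟨hp.1, hp.2.1, hyp_adj.2 hp.2.2⟩

/-- membership half -/
lemma crossCount_mem {d : ℕ} (hd : 1 ≤ d) :
    ∃ S : Set (Fin d → Bool),
        2 * S.ncard = Fintype.card (Fin d → Bool) ∧
        crossCount (hypercube d) S = 2 ^ (d - 1) := by
  classical
  set i0 : Fin d := ⟨0, hd⟩ with hi0
  set S : Set (Fin d → Bool) := {x | x i0 = true} with hSdef
  set neg : (Fin d → Bool) → (Fin d → Bool) := fun x i => if i = i0 then !x i else x i with hneg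
  have hneg_inv : Function.Involutive neg := by
    intro x
    funext i
    by_cases h : i = i0 <;> simp [hneg, h]
  have hneg_inj : Function.Injective neg := hneg_inv.injective
  have himg : neg '' S = Sᶜ := by
    ext z
    simp only [Set.mem_image, hSdef, Set.mem_compl_iff, Set.mem_setOf_eq]
    constructor
    · rintro ⟨x, hx, rfl⟩
      simp [hneg, hx]
    · intro hz
      refine ⟨neg z, ?_, hneg_inv z⟩
      simp only [Bool.not_eq_true] at hz
      simp [hneg, hz]
  have hbal : 2 * S.ncard = Fintype.card (Fin d → Bool) := by
    have h1 : S.ncard + Sᶜ.ncard = Nat.card (Fin d → Bool) :=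
      Set.ncard_add_ncard_compl S
    have h2 : Sᶜ.ncard = S.ncard := by rw [← himg, Set.ncard_image_of_injective _ hneg_inj]
    rw [Nat.card_eq_fintype_card] at h1
    omega
  refine ⟨S, hbal, ?_⟩
  have hpair : {p : (Fin d → Bool) × (Fin d → Bool) | p.1 ∈ S ∧ p.2 ∉ S ∧
      (hypercube d).Adj p.1 p.2} = (fun x => (x, neg x)) '' S := by
    ext ⟨x, y⟩
    simp only [Set.mem_setOf_eq, Set.mem_image, Prod.mk.injEq]
    constructor
    · rintro ⟨hx, hy, hadj⟩
      refine ⟨x, hx, rfl, ?_⟩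
      rw [hyp_adj, hamRel] at hadj
      have hx0 : x i0 = true := hx
      have hy0 : y i0 = false := by
        simp only [hSdef, Set.mem_setOf_eq, Bool.not_eq_true] at hy
        exact hy
      have hi0mem : i0 ∈ univ.filter (fun i => x i ≠ y i) := by
        simp [hx0, hy0]
      have hsing : univ.filter (fun i => x i ≠ y i) = {i0} :=
        Finset.eq_singleton_iff_unique_mem.2 ⟨hi0mem, fun j hj => by
          by_contra hne
          have h2' : ({i0, j} : Finset (Fin d)) ⊆ univ.filter (fun i => x i ≠ y i) := by
            intro k hk
            rcases Finset.mem_insert.1 hk with rfl | hk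
            · exact hi0mem
            · rwa [Finset.mem_singleton.1 hk]
          have := Finset.card_le_card h2'
          rw [hadj, Finset.card_insert_of_notMem (by simp [Ne.symm hne])] at this
          simp at this⟩
      funext i
      by_cases h : i = i0
      · subst h; simp [hneg, hx0, hy0]
      · have : i ∉ univ.filter (fun i => x i ≠ y i) := by
          rw [hsing]; simp [h]
        simp only [mem_filter, mem_univ, true_and, not_not] at this
        simp [hneg, h, ← this]
    · rintro ⟨x', hx', rfl, rfl⟩
      refine ⟨hx', ?_, ?_⟩
      · simp only [hSdef, Set.mem_setOf_eq] at hx' ⊢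
        simp [hneg, hx']
      · rw [hyp_adj, hamRel]
        have : univ.filter (fun i => x' i ≠ neg x' i) = {i0} := by
          ext i
          by_cases h : i = i0 <;> simp [hneg, h]
        rw [this, Finset.card_singleton]
  rw [crossCount, hpair, Set.ncard_image_of_injective _ (fun a b hab => (Prod.mk.injEq _ _ _ _ ▸ hab).1)]
  -- S.ncard = 2^(d-1)
  have hcardV : Fintype.card (Fin d → Bool) = 2 ^ d := by simp
  have h2 : 2 ^ d = 2 * 2 ^ (d - 1) := by
    rw [← pow_succ']; congr 1; omega
  omega

/-- discrete intermediate value: a list starting in R and ending outside R has a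
consecutive pair crossing out of R -/
lemma list_cross {α : Type*} (R : α → Prop) :
    ∀ (l : List α) (a b : α), l.head? = some a → l.getLast? = some b → R a → ¬ R b →
      ∃ pq ∈ l.zip l.tail, R pq.1 ∧ ¬ R pq.2
  | [], a, b => by simp
  | [x], a, b => by
      intro ha hb hRa hRb
      simp only [List.head?_cons, Option.some.injEq] at ha
      simp only [List.getLast?_singleton, Option.some.injEq] at hb
      subst ha; subst hb
      exact absurd hRa hRb
  | x :: y :: t, a, b => by
      intro ha hb hRa hRb
      simp only [List.head?_cons, Option.some.injEq] at ha
      subst ha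
      have hzip : (x :: y :: t).zip (x :: y :: t).tail
          = (x, y) :: (y :: t).zip (y :: t).tail := by
        simp [List.zip]
      by_cases hRy : R y
      · have hb' : (y :: t).getLast? = some b := by
          rwa [List.getLast?_cons_cons] at hb
        obtain ⟨pq, hpq, hprop⟩ := list_cross R (y :: t) y b rfl hb' hRy hRb
        exact ⟨pq, by rw [hzip]; exact List.mem_cons_of_mem _ hpq, hprop⟩
      · exact ⟨(x, y), by rw [hzip]; exact List.mem_cons_self, hRa, hRy⟩

lemma chain'_zip {α : Type*} (r : α → α → Prop) :
    ∀ (l : List α), l.Chain' r → ∀ pq ∈ l.zip l.tail, r pq.1 pq.2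
  | [] => by simp
  | [x] => by simp
  | x :: y :: t => by
      intro hc pq hpq
      change List.IsChain r _ at hc
      rw [List.isChain_cons_cons] at hc
      have hzip : (x :: y :: t).zip (x :: y :: t).tail
          = (x, y) :: (y :: t).zip (y :: t).tail := by
        simp [List.zip]
      rw [hzip] at hpq
      rcases List.mem_cons.1 hpq with rfl | hpq
      · exact hc.1
      · exact chain'_zip r (y :: t) hc.2 pq hpq

/-- the generic crossing-count bound for a layout -/
lemma crossCount_le_boundary {V : Type*} [Fintype V] {G : SimpleGraph V}
    (L : GridLayout G) (S : Finset V) (R : ℤ × ℤ → Prop) [DecidablePred R]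
    (hS : ∀ u ∈ S, R (L.pos u)) (hS' : ∀ v ∉ S, ¬ R (L.pos v))
    (B : Finset ((ℤ × ℤ) × (ℤ × ℤ)))
    (hB : ∀ p q : ℤ × ℤ, R p → ¬ R q → |p.1 - q.1| + |p.2 - q.2| = 1 →
      (0 ≤ p.1 ∧ p.1 < L.Wd ∧ 0 ≤ p.2 ∧ p.2 < L.Ht) →
      (0 ≤ q.1 ∧ q.1 < L.Wd ∧ 0 ≤ q.2 ∧ q.2 < L.Ht) → (p, q) ∈ B) :
    crossCount G ↑S ≤ B.card := by
  classical
  rw [crossCount_coe]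
  set f : V × V → (ℤ × ℤ) × (ℤ × ℤ) := fun p =>
    ((List.find? (fun sg => decide (R sg.1) && !decide (R sg.2))
      ((L.route p.1 p.2).zip (L.route p.1 p.2).tail)).getD ((0,0),(0,0))) with hf
  have key : ∀ p ∈ cutF G.Adj S, f p ∈ (L.route p.1 p.2).zip (L.route p.1 p.2).tail ∧
      R (f p).1 ∧ ¬ R (f p).2 := by
    intro p hp
    rw [mem_cutF] at hp
    obtain ⟨h1, h2, hadj⟩ := hp
    have hex : ∃ sg ∈ (L.route p.1 p.2).zip (L.route p.1 p.2).tail,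
        (fun sg => decide (R sg.1) && !decide (R sg.2)) sg = true := by
      obtain ⟨pq, hpq, hr1, hr2⟩ := list_cross R (L.route p.1 p.2) (L.pos p.1) (L.pos p.2)
        (L.route_head _ _ hadj) (L.route_last _ _ hadj) (hS _ h1) (hS' _ h2)
      exact ⟨pq, hpq, by simp [hr1, hr2]⟩
    have hsome : (List.find? (fun sg => decide (R sg.1) && !decide (R sg.2))
        ((L.route p.1 p.2).zip (L.route p.1 p.2).tail)).isSome := by
      rw [List.find?_isSome]
      exact hex
    obtain ⟨sg, hsg⟩ := Option.isSome_iff_exists.1 hsome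
    have hmem := List.mem_of_find?_eq_some hsg
    have hpred := List.find?_some hsg
    simp only [Bool.and_eq_true, decide_eq_true_eq, Bool.not_eq_true',
      decide_eq_false_iff_not] at hpred
    rw [hf]
    simp only [hsg, Option.getD_some]
    exact ⟨hmem, hpred.1, hpred.2⟩
  refine Finset.card_le_card_of_injOn f ?_ ?_
  · intro p hp
    obtain ⟨hmem, hr1, hr2⟩ := key p hp
    rw [Finset.mem_coe, mem_cutF] at hp
    obtain ⟨h1, h2, hadj⟩ := hp
    have hstep : |(f p).1.1 - (f p).2.1| + |(f p).1.2 - (f p).2.2| = 1 := by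
      have := chain'_zip _ _ (L.route_chain _ _ hadj) _ hmem
      exact this
    have hbox1 := L.route_mem _ _ hadj (f p).1 (List.of_mem_zip (a := (f p).1) (b := (f p).2) hmem).1
    have hbox2 := L.route_mem _ _ hadj (f p).2
      (List.mem_of_mem_tail (List.of_mem_zip (a := (f p).1) (b := (f p).2) hmem).2)
    have := hB (f p).1 (f p).2 hr1 hr2 hstep hbox1 hbox2
    simpa using this
  · intro p hp q hq hfeq
    rw [Finset.mem_coe] at hp hq
    obtain ⟨hmemp, _, _⟩ := key p hp
    obtain ⟨hmemq, _, _⟩ := key q hq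
    rw [mem_cutF] at hp hq
    by_contra hne
    have hsymne : s(p.1, p.2) ≠ s(q.1, q.2) := by
      intro hs
      rw [Sym2.eq, Sym2.rel_iff'] at hs
      rcases hs with h | h
      · exact hne (Prod.ext_iff.2 ⟨congrArg Prod.fst h, congrArg Prod.snd h⟩)
      · have : p.1 = q.2 := congrArg Prod.fst h
        exact hq.2.1 (this ▸ hp.1)
    have := (L.seg_disjoint p.1 p.2 q.1 q.2 hp.2.2 hq.2.2 hsymne (f p) hmemp).1
    rw [hfeq] at this
    exact this hmemq

/-- transpose a layout -/
def GridLayout.transpose {V : Type*} {G : SimpleGraph V} (L : GridLayout G) :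
    GridLayout G where
  Wd := L.Ht
  Ht := L.Wd
  pos := fun v => ((L.pos v).2, (L.pos v).1)
  pos_inj := by
    intro a b hab
    apply L.pos_inj
    simp only [Prod.ext_iff] at hab ⊢
    exact ⟨hab.2, hab.1⟩
  pos_mem := fun v => by
    obtain ⟨h1, h2, h3, h4⟩ := L.pos_mem v
    exact ⟨h3, h4, h1, h2⟩
  route := fun u v => (L.route u v).map Prod.swap
  route_head := fun u v h => by
    rw [List.head?_map, L.route_head u v h]
    rfl
  route_last := fun u v h => by
    rw [List.getLast?_map, L.route_last u v h]
    rfl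
  route_chain := fun u v h => by
    show List.IsChain _ _
    rw [List.isChain_map]
    refine (show List.IsChain _ _ from L.route_chain u v h).imp ?_
    intro a b hab
    simp only [Prod.swap]
    rw [add_comm]
    exact hab
  route_mem := fun u v h p hp => by
    rw [List.mem_map] at hp
    obtain ⟨q, hq, rfl⟩ := hp
    obtain ⟨h1, h2, h3, h4⟩ := L.route_mem u v h q hq
    exact ⟨h3, h4, h1, h2⟩
  seg_disjoint := fun u v u' v' h h' hne sg hsg => by
    have hswapinj : Function.Injective (Prod.swap : ℤ × ℤ → ℤ × ℤ) :=
      Prod.swap_injective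
    have hzipmap : ∀ w z, ((L.route w z).map Prod.swap).zip (((L.route w z).map Prod.swap).tail)
        = ((L.route w z).zip (L.route w z).tail).map (Prod.map Prod.swap Prod.swap) := by
      intro w z
      rw [← List.map_tail, List.zip_map]
    rw [hzipmap] at hsg
    rw [List.mem_map] at hsg
    obtain ⟨sg', hsg', rfl⟩ := hsg
    have hd := L.seg_disjoint u v u' v' h h' hne sg' hsg'
    have hinj : Function.Injective
        (Prod.map (Prod.swap : ℤ×ℤ → ℤ×ℤ) (Prod.swap : ℤ×ℤ → ℤ×ℤ)) := by
      intro a b hab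
      have h1 : a.1.swap = b.1.swap := congrArg Prod.fst hab
      have h2 : a.2.swap = b.2.swap := congrArg Prod.snd hab
      exact Prod.ext_iff.2 ⟨hswapinj h1, hswapinj h2⟩
    constructor
    · rw [hzipmap, List.mem_map]
      rintro ⟨sg'', hsg'', heq⟩
      rw [hinj heq] at hsg''
      exact hd.1 hsg''
    · rw [hzipmap, List.mem_map]
      rintro ⟨sg'', hsg'', heq⟩
      have : sg'' = (sg'.2, sg'.1) := by
        apply hinj
        rw [heq]
        rfl
      rw [this] at hsg''
      exact hd.2 hsg''

section test
variable {V : Type*} [Fintype V] [DecidableEq V]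

/-- there is a set of the m smallest elements under an injective key -/
lemma exists_smallest {L : Type*} [LinearOrder L] (k : V → L)
    (hk : Function.Injective k) :
    ∀ m, m ≤ Fintype.card V → ∃ S : Finset V, S.card = m ∧
      ∀ u ∈ S, ∀ v ∉ S, k u < k v := by
  intro m
  induction m with
  | zero => exact fun _ => ⟨∅, rfl, by simp⟩
  | succ m ih =>
    intro h
    obtain ⟨S, hc, hs⟩ := ih (by omega)
    have hne : (Sᶜ : Finset V).Nonempty := by
      rw [← Finset.card_pos, Finset.card_compl]
      omega
    obtain ⟨v0, hv0, hmin⟩ := Finset.exists_min_image Sᶜ k hne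
    rw [Finset.mem_compl] at hv0
    refine ⟨insert v0 S, by rw [Finset.card_insert_of_notMem hv0, hc], ?_⟩
    intro u hu v hv
    have hvS : v ∉ S := fun hc' => hv (Finset.mem_insert_of_mem hc')
    have hvv0 : v ≠ v0 := fun hc' => hv (hc' ▸ Finset.mem_insert_self _ _)
    rcases Finset.mem_insert.1 hu with rfl | hu
    · exact lt_of_le_of_ne (hmin v (Finset.mem_compl.2 hvS)) (fun hc' => hvv0 (hk hc'.symm))
    · exact hs u hu v hvS
end test


lemma ht_bound {d : ℕ} (hd : 1 ≤ d) (L : GridLayout (hypercube d)) :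
    2 ^ (d - 1) ≤ 2 * L.Ht + 1 := by
  classical
  have hcardV : Fintype.card (Fin d → Bool) = 2 ^ d := by simp
  have hle : 2 ^ (d - 1) ≤ Fintype.card (Fin d → Bool) := by
    rw [hcardV]
    exact Nat.pow_le_pow_right (by norm_num) (by omega)
  set k : (Fin d → Bool) → (ℤ ×ₗ ℤ) := fun v => toLex (L.pos v) with hk
  have hkinj : Function.Injective k := by
    intro a b hab
    exact L.pos_inj (by simpa [hk] using congrArg ofLex hab)
  obtain ⟨S, hScard, hSsep⟩ := exists_smallest k hkinj (2 ^ (d - 1)) hle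
  have hSne : S.Nonempty := by
    rw [← Finset.card_pos, hScard]
    positivity
  obtain ⟨t, htS, htmax⟩ := Finset.exists_max_image S k hSne
  set x0 : ℤ := (L.pos t).1 with hx0
  set y0 : ℤ := (L.pos t).2 with hy0
  set B : Finset ((ℤ × ℤ) × (ℤ × ℤ)) :=
    ((Finset.Ico (0:ℤ) L.Ht).image fun y => ((x0, y), (x0 + 1, y))) ∪
    ((Finset.Ico (0:ℤ) L.Ht).image fun y => ((x0 - 1, y), (x0, y))) ∪
    {((x0, y0), (x0, y0 + 1))} with hB
  have hbound := crossCount_le_boundary L S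
      (fun z => z.1 < x0 ∨ (z.1 = x0 ∧ z.2 ≤ y0))
      (fun u hu => by
        have := (Prod.Lex.toLex_le_toLex (x := L.pos u) (y := L.pos t)).1 (htmax u hu)
        exact this)
      (fun v hv => by
        have hlt := (Prod.Lex.toLex_lt_toLex (x := L.pos t) (y := L.pos v)).1 (hSsep t htS v hv)
        intro hR
        rcases hlt with h | ⟨h1, h2⟩ <;> rcases hR with h' | ⟨h1', h2'⟩ <;> omega)
      B ?_
  · -- assemble
    have hcardB : B.card ≤ 2 * L.Ht + 1 := by
      have h1 := Finset.card_union_le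
        (((Finset.Ico (0:ℤ) L.Ht).image fun y => ((x0, y), (x0 + 1, y))) ∪
         ((Finset.Ico (0:ℤ) L.Ht).image fun y => ((x0 - 1, y), (x0, y))))
        ({((x0, y0), (x0, y0 + 1))} : Finset ((ℤ × ℤ) × (ℤ × ℤ)))
      have h2 := Finset.card_union_le
        ((Finset.Ico (0:ℤ) L.Ht).image fun y => ((x0, y), (x0 + 1, y)))
        ((Finset.Ico (0:ℤ) L.Ht).image fun y => ((x0 - 1, y), (x0, y)))
      have h3 : ((Finset.Ico (0:ℤ) L.Ht).image fun y => ((x0, y), (x0 + 1, y))).card ≤ L.Ht :=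
        (Finset.card_image_le).trans (by simp [Int.card_Ico])
      have h4 : ((Finset.Ico (0:ℤ) L.Ht).image fun y => ((x0 - 1, y), (x0, y))).card ≤ L.Ht :=
        (Finset.card_image_le).trans (by simp [Int.card_Ico])
      have h5 : ({((x0, y0), (x0, y0 + 1))} : Finset ((ℤ × ℤ) × (ℤ × ℤ))).card = 1 :=
        Finset.card_singleton _
      rw [hB]
      omega
    have hlow : 2 ^ (d - 1) ≤ crossCount (hypercube d) ↑S := by
      apply crossCount_lower hd
      rw [Set.ncard_coe_finset, hScard, hcardV, ← pow_succ']
      congr 1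
      omega
    exact hlow.trans (hbound.trans hcardB)
  · -- B covers all crossing segments
    rintro ⟨px, py⟩ ⟨qx, qy⟩ hp hq hstep hbox1 hbox2
    obtain ⟨hp1, hp2, hp3, hp4⟩ := hbox1
    obtain ⟨hq1, hq2, hq3, hq4⟩ := hbox2
    have hp' : px < x0 ∨ (px = x0 ∧ py ≤ y0) := hp
    have hq' : ¬(qx < x0 ∨ (qx = x0 ∧ qy ≤ y0)) := hq
    rw [not_or, not_and_or] at hq'
    obtain ⟨hqa, hqb⟩ := hq'
    simp only at hstep hp1 hp2 hp3 hp4 hq1 hq2 hq3 hq4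
    rw [Int.abs_eq_natAbs, Int.abs_eq_natAbs] at hstep
    have hcases : (qx = px + 1 ∧ qy = py) ∨ (qx = px - 1 ∧ qy = py) ∨
        (qx = px ∧ qy = py + 1) ∨ (qx = px ∧ qy = py - 1) := by
      omega
    have hqb' : qx = x0 → y0 < qy := by
      intro h
      rcases hqb with h' | h'
      · exact absurd h h'
      · omega
    rcases hcases with ⟨hc1, hc2⟩ | ⟨hc1, hc2⟩ | ⟨hc1, hc2⟩ | ⟨hc1, hc2⟩
    · rcases hp' with hplt | ⟨hpe, hpy⟩
      · refine Finset.mem_union_left _ (Finset.mem_union_right _ ?_)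
        rw [Finset.mem_image]
        refine ⟨py, Finset.mem_Ico.2 ⟨hp3, hp4⟩, ?_⟩
        simp only [Prod.mk.injEq]
        exact ⟨⟨by omega, trivial⟩, by omega, by omega⟩
      · refine Finset.mem_union_left _ (Finset.mem_union_left _ ?_)
        rw [Finset.mem_image]
        refine ⟨py, Finset.mem_Ico.2 ⟨hp3, hp4⟩, ?_⟩
        simp only [Prod.mk.injEq]
        exact ⟨⟨by omega, trivial⟩, by omega, by omega⟩
    · exfalso
      rcases hp' with h | ⟨h1, h2⟩ <;> omega
    · refine Finset.mem_union_right _ ?_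
      rw [Finset.mem_singleton]
      have hx : px = x0 := by rcases hp' with h | ⟨h1, h2⟩ <;> omega
      have hy : py = y0 := by
        rcases hp' with h | ⟨h1, h2⟩
        · omega
        · have := hqb' (by omega)
          omega
      simp only [Prod.mk.injEq]
      omega
    · exfalso
      rcases hp' with h | ⟨h1, h2⟩
      · omega
      · have := hqb' (by omega)
        omega

/-- The bisection width of the hypercube on `n = 2^d` vertices is `n/2 = 2^{d-1}`,
and any planar grid layout of a graph needs area at least the square of its
bisection width divided by a constant; hence a planar layout of the hypercube
requires area `Ω(n²)`. -/
theorem stmt17 :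
    ∃ c : ℝ, 0 < c ∧ ∀ d : ℕ, 1 ≤ d →
      IsLeast {w : ℕ | ∃ S : Set (Fin d → Bool),
          2 * S.ncard = Fintype.card (Fin d → Bool) ∧ crossCount (hypercube d) S = w}
        (2 ^ (d - 1)) ∧
      ∀ L : GridLayout (hypercube d),
        ((2:ℝ) ^ (d - 1)) ^ 2 / c ≤ ((L.Wd * L.Ht : ℕ) : ℝ) := by
  refine ⟨9, by norm_num, fun d hd => ⟨⟨crossCount_mem hd, ?_⟩, ?_⟩⟩
  · rintro w ⟨S, h1, h2⟩
    rw [← h2]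
    exact crossCount_lower hd S h1
  · intro L
    have hHt1 : 1 ≤ L.Ht := by
      have := (L.pos_mem (fun _ => true)).2.2
      have h0 : (0:ℤ) < L.Ht := lt_of_le_of_lt this.1 this.2
      exact_mod_cast h0
    have hWd1 : 1 ≤ L.Wd := by
      have := (L.pos_mem (fun _ => true)).2.1
      have h0 : (0:ℤ) < L.Wd := lt_of_le_of_lt (L.pos_mem (fun _ => true)).1 this
      exact_mod_cast h0
    have h1 : 2 ^ (d - 1) ≤ 3 * L.Ht := by
      have := ht_bound hd L
      omega
    have h2 : 2 ^ (d - 1) ≤ 3 * L.Wd := by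
      have := ht_bound hd L.transpose
      have he : L.transpose.Ht = L.Wd := rfl
      rw [he] at this
      omega
    have hnat : 2 ^ (d - 1) * 2 ^ (d - 1) ≤ 9 * (L.Wd * L.Ht) :=
      calc 2 ^ (d - 1) * 2 ^ (d - 1) ≤ (3 * L.Ht) * (3 * L.Wd) := Nat.mul_le_mul h1 h2
        _ = 9 * (L.Wd * L.Ht) := by ring
    have hcast : ((2:ℝ) ^ (d - 1)) * (2:ℝ) ^ (d - 1) ≤ 9 * ((L.Wd : ℝ) * (L.Ht : ℝ)) := by
      exact_mod_cast hnat
    rw [div_le_iff₀ (by norm_num : (0:ℝ) < 9)]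
    push_cast
    nlinarith [hcast]
end
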